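/- Let K ⊆ ℝⁿ be a compact convex nonempty set, η > 0, and let f : ℝⁿ → ℝ be differentiable with a β-Lipschitz gradient (β-smooth). Then there exists a point x* ∈ K such that ∇_{K,η} f(x*) = 0, i.e., the (K,η)-projected gradient of f vanishes at x*. -/

import Mathlib

open RealInnerProductSpace InnerProductSpace


/- Euclidean (nearest-point) projection onto a set `K`.  For a nonempty closed
convex set in a complete inner product space this is the usual orthogonal
projection onto `K`. -/
open Classical in
noncomputable def projOn {E : Type*} [NormedAddCommGroup E] [InnerProductSpace ℝ E]
    (K : Set E) (u : E) : E :=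
  if h : ∃ v, v ∈ K ∧ ∀ w ∈ K, ‖u - v‖ ≤ ‖u - w‖ then h.choose else u

/-- The `(K, η)`-projected gradient of `f` at `x`:
`∇_{K,η} f(x) = (1/η) (x − Π_K[x − η ∇f(x)])`. -/
noncomputable def projGrad {E : Type*} [NormedAddCommGroup E] [InnerProductSpace ℝ E]
    [CompleteSpace E] (K : Set E) (η : ℝ) (f : E → ℝ) (x : E) : E :=
  (1 / η) • (x - projOn K (x - η • gradient f x))

/-- If `v ∈ K` minimizes the distance to `u` over the convex set `K`, then
`projOn K u = v`. -/
theorem projOn_eq_of_isMin {E : Type*} [NormedAddCommGroup E] [InnerProductSpace ℝ E]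
    {K : Set E} (hK : Convex ℝ K) {u v : E} (hv : v ∈ K)
    (hmin : ∀ w ∈ K, ‖u - v‖ ≤ ‖u - w‖) : projOn K u = v := by
  have h : ∃ v, v ∈ K ∧ ∀ w ∈ K, ‖u - v‖ ≤ ‖u - w‖ := ⟨v, hv, hmin⟩
  rw [projOn, dif_pos h]
  obtain ⟨hv', hmin'⟩ := h.choose_spec
  set v' := h.choose
  -- both v and v' realize the infimum
  have hne : Nonempty K := ⟨v, hv⟩
  have hbdd : BddBelow (Set.range fun w : K => ‖u - w‖) :=
    ⟨0, fun _ ⟨_, h⟩ => h ▸ norm_nonneg _⟩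
  have hinf : ∀ x : E, x ∈ K → (∀ w ∈ K, ‖u - x‖ ≤ ‖u - w‖) →
      ‖u - x‖ = ⨅ w : K, ‖u - w‖ := by
    intro x hx hxmin
    refine le_antisymm (le_ciInf fun w => hxmin w w.2) (ciInf_le hbdd ⟨x, hx⟩)
  have h1 := (norm_eq_iInf_iff_real_inner_le_zero hK hv).mp (hinf v hv hmin)
  have h2 := (norm_eq_iInf_iff_real_inner_le_zero hK hv').mp (hinf v' hv' hmin')
  have k1 := h1 v' hv'
  have k2 := h2 v hv
  have key : ⟪v' - v, v' - v⟫_ℝ = ⟪u - v, v' - v⟫_ℝ + ⟪u - v', v - v'⟫_ℝ := by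
    simp only [inner_sub_left, inner_sub_right, real_inner_comm v v']
    ring
  have hle : ⟪v' - v, v' - v⟫_ℝ ≤ 0 := by rw [key]; linarith
  have hz : v' - v = 0 := by
    rw [← inner_self_eq_zero (𝕜 := ℝ)]
    exact le_antisymm hle real_inner_self_nonneg
  exact sub_eq_zero.mp hz

/-- If `K ⊆ ℝⁿ` is a compact convex nonempty set, `η > 0`, and
`f` is differentiable with a `β`-Lipschitz gradient, then there is a point of `K`
at which the `(K,η)`-projected gradient of `f` vanishes. -/
theorem exists_projGrad_eq_zero {n : ℕ} (K : Set (EuclideanSpace ℝ (Fin n)))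
    (hKcomp : IsCompact K) (hKconv : Convex ℝ K) (hKne : K.Nonempty)
    (η : ℝ) (hη : 0 < η) (f : EuclideanSpace ℝ (Fin n) → ℝ) (β : ℝ)
    (hdiff : Differentiable ℝ f)
    (hsmooth : ∀ x y, ‖gradient f x - gradient f y‖ ≤ β * ‖x - y‖) :
    ∃ x ∈ K, projGrad K η f x = 0 := by
  obtain ⟨x, hxK, hxmin⟩ := hKcomp.exists_isMinOn hKne hdiff.continuous.continuousOn
  refine ⟨x, hxK, ?_⟩
  -- first-order optimality: ⟪∇f x, w - x⟫ ≥ 0 for all w ∈ K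
  have hfo : ∀ w ∈ K, (0 : ℝ) ≤ ⟪gradient f x, w - x⟫_ℝ := by
    intro w hw
    have htc : w - x ∈ posTangentConeAt K x :=
      sub_mem_posTangentConeAt_of_segment_subset (hKconv.segment_subset hxK hw)
    have hgrad := (hdiff x).hasGradientAt
    have hfd : HasFDerivAt f ((InnerProductSpace.toDualMap ℝ _) (gradient f x)) x :=
      hasGradientAt_iff_hasFDerivAt.mp hgrad
    have h0 := hxmin.localize.hasFDerivWithinAt_nonneg hfd.hasFDerivWithinAt htc
    rwa [InnerProductSpace.toDualMap_apply_apply] at h0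
  -- x is the projection of u := x - η • ∇f x
  set u := x - η • gradient f x with hu
  have hmin : ∀ w ∈ K, ‖u - x‖ ≤ ‖u - w‖ := by
    have hchar : ∀ w ∈ K, ⟪u - x, w - x⟫_ℝ ≤ 0 := by
      intro w hw
      have : u - x = -(η • gradient f x) := by rw [hu]; abel
      rw [this, inner_neg_left, real_inner_smul_left]
      have := hfo w hw
      nlinarith
    intro w hw
    have hne : Nonempty K := ⟨x, hxK⟩
    have hinf := (norm_eq_iInf_iff_real_inner_le_zero hKconv hxK).mpr hchar
    have hbdd : BddBelow (Set.range fun w : K => ‖u - (w : EuclideanSpace ℝ (Fin n))‖) := by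
      refine ⟨0, ?_⟩
      rintro r ⟨w, rfl⟩
      exact norm_nonneg _
    calc ‖u - x‖ = ⨅ w : K, ‖u - w‖ := hinf
      _ ≤ ‖u - w‖ := ciInf_le hbdd ⟨w, hw⟩
  have hproj : projOn K u = x := projOn_eq_of_isMin hKconv hxK hmin
  unfold projGrad
  rw [← hu, hproj]
  simp
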